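/- arXiv:2209.12670 — 3 statements merged into one kernel-verified Lean document; each statement's English description precedes it below -/
import Mathlib

section
/- For every integer n ≥ 1, 2·∫₀^∞ e^{-x²} dx ≤ (1/√n) · ∏_{k=1}^{n} (2k/(2k-1)). -/
open MeasureTheory Real Topology Filter

private noncomputable def Pdd (n : ℕ) : ℝ := ∏ k ∈ Finset.Icc 1 n, (2 * (k : ℝ)) / (2 * k - 1)

private lemma Pdd_pos (n : ℕ) : 0 < Pdd n := by
  apply Finset.prod_pos
  intro k hk
  have hk1 : 1 ≤ k := (Finset.mem_Icc.mp hk).1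
  have : (1 : ℝ) ≤ (k : ℝ) := by exact_mod_cast hk1
  apply div_pos <;> nlinarith

private lemma Pdd_succ (n : ℕ) :
    Pdd (n + 1) = Pdd n * ((2 * n + 2) / (2 * n + 1)) := by
  rw [Pdd, Pdd, Finset.prod_Icc_succ_top (Nat.succ_le_succ (Nat.zero_le n))]
  push_cast
  congr 1 <;> ring

private lemma Pdd_sq (n : ℕ) : (Pdd n) ^ 2 = Real.Wallis.W n * (2 * n + 1) := by
  induction n with
  | zero => simp [Pdd, Real.Wallis.W]
  | succ n ih =>
    have h1 : (2 * (n : ℝ) + 1) ≠ 0 := by positivity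
    have h3 : (2 * (n : ℝ) + 3) ≠ 0 := by positivity
    rw [Pdd_succ, Real.Wallis.W_succ, mul_pow, ih]
    push_cast
    field_simp
    ring

private lemma tendsto_a :
    Filter.Tendsto (fun n : ℕ => (Pdd n) ^ 2 / n) Filter.atTop (𝓝 π) := by
  have h2 : Filter.Tendsto (fun n : ℕ => (2 * (n : ℝ) + 1) / n) Filter.atTop (𝓝 2) := by
    have : Filter.Tendsto (fun n : ℕ => (2 : ℝ) + 1 / n) Filter.atTop (𝓝 (2 + 0)) :=
      tendsto_const_nhds.add tendsto_one_div_atTop_nhds_zero_nat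
    rw [add_zero] at this
    apply this.congr'
    filter_upwards [Filter.eventually_ge_atTop 1] with n hn
    have hn0 : (n : ℝ) ≠ 0 := by positivity
    field_simp
  have := Real.Wallis.tendsto_W_nhds_pi_div_two.mul h2
  have hπ : π / 2 * 2 = π := by ring
  rw [hπ] at this
  apply this.congr
  intro n
  rw [Pdd_sq, mul_div_assoc]

private lemma a_antitone {m n : ℕ} (hn : 1 ≤ n) (hmn : n ≤ m) :
    (Pdd m) ^ 2 / m ≤ (Pdd n) ^ 2 / n := by
  induction m, hmn using Nat.le_induction with
  | base => exact le_rfl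
  | succ m hm ih =>
    refine le_trans ?_ ih
    have hm1 : (1 : ℝ) ≤ (m : ℝ) := by exact_mod_cast le_trans hn hm
    have h1 : (0 : ℝ) < 2 * m + 1 := by linarith
    have key : ((2 * (m : ℝ) + 2) / (2 * m + 1)) ^ 2 ≤ ((m : ℝ) + 1) / m := by
      rw [div_pow, div_le_div_iff₀ (by positivity) (by linarith)]
      nlinarith
    have hq : (0 : ℝ) ≤ (Pdd m) ^ 2 := sq_nonneg _
    calc (Pdd (m + 1)) ^ 2 / (m + 1 : ℕ)
        = (Pdd m) ^ 2 * ((2 * m + 2) / (2 * m + 1)) ^ 2 / ((m : ℝ) + 1) := by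
          rw [Pdd_succ, mul_pow]; push_cast; ring
      _ ≤ (Pdd m) ^ 2 * (((m : ℝ) + 1) / m) / ((m : ℝ) + 1) := by gcongr
      _ = (Pdd m) ^ 2 / m := by
          field_simp

theorem two_probability_integral_le_wallis (n : ℕ) (hn : 1 ≤ n) :
    2 * ∫ x in Set.Ioi (0 : ℝ), Real.exp (-x ^ 2) ≤
      1 / Real.sqrt n * ∏ k ∈ Finset.Icc 1 n, (2 * (k : ℝ)) / (2 * k - 1) := by
  have hint : (∫ x in Set.Ioi (0 : ℝ), Real.exp (-x ^ 2)) = Real.sqrt π / 2 := by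
    have := integral_gaussian_Ioi 1
    simpa using this
  have hπa : π ≤ (Pdd n) ^ 2 / n := by
    refine le_of_tendsto tendsto_a ?_
    filter_upwards [Filter.eventually_ge_atTop n] with m hm
    exact a_antitone hn hm
  have hn0 : (0 : ℝ) < (n : ℝ) := by exact_mod_cast hn
  have hsq : Real.sqrt π ≤ Real.sqrt ((Pdd n) ^ 2 / n) := Real.sqrt_le_sqrt hπa
  have heq : Real.sqrt ((Pdd n) ^ 2 / n) = 1 / Real.sqrt n * Pdd n := by
    rw [Real.sqrt_div (sq_nonneg _), Real.sqrt_sq (Pdd_pos n).le]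
    ring
  rw [hint]
  calc 2 * (Real.sqrt π / 2) = Real.sqrt π := by ring
    _ ≤ 1 / Real.sqrt n * Pdd n := heq ▸ hsq
end

section
/- For every integer n ≥ 1, √(2n/(2n+1)) · (1/√n) · ∏_{k=1}^{n} (2k/(2k-1)) ≤ 2·∫₀^∞ e^{-x²} dx. -/
open MeasureTheory Real

lemma wallis_W_eq (n : ℕ) :
    Real.Wallis.W n =
      (∏ k ∈ Finset.Icc 1 n, (2 * (k : ℝ)) / (2 * k - 1)) ^ 2 / (2 * n + 1) := by
  induction n with
  | zero => simp [Real.Wallis.W]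
  | succ n ih =>
    rw [Real.Wallis.W_succ, ih, Finset.prod_Icc_succ_top (by omega)]
    have h1 : (2 * (n : ℝ) + 1) ≠ 0 := by positivity
    have h3 : (2 * (n : ℝ) + 3) ≠ 0 := by positivity
    push_cast
    rw [show (2 * ((n:ℝ) + 1) - 1) = 2 * n + 1 by ring, show (2 * ((n:ℝ) + 1) + 1) = 2 * n + 3 by ring]
    field_simp

theorem wallis_le_two_probability_integral (n : ℕ) (hn : 1 ≤ n) :
    Real.sqrt (2 * n / (2 * n + 1)) * (1 / Real.sqrt n) *
        ∏ k ∈ Finset.Icc 1 n, (2 * (k : ℝ)) / (2 * k - 1) ≤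
      2 * ∫ x in Set.Ioi (0 : ℝ), Real.exp (-x ^ 2) := by
  have hint : (∫ x in Set.Ioi (0 : ℝ), Real.exp (-x ^ 2)) = Real.sqrt π / 2 := by
    simpa using integral_gaussian_Ioi 1
  rw [hint, mul_div_cancel₀ _ (two_ne_zero)]
  set P : ℝ := ∏ k ∈ Finset.Icc 1 n, (2 * (k : ℝ)) / (2 * k - 1) with hPdef
  have hP : 0 ≤ P := by
    apply Finset.prod_nonneg
    intro k hk
    have hk1 : 1 ≤ k := (Finset.mem_Icc.mp hk).1
    have : (1 : ℝ) ≤ k := by exact_mod_cast hk1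
    have : (0 : ℝ) < 2 * k - 1 := by linarith
    positivity
  have hn' : (1 : ℝ) ≤ n := by exact_mod_cast hn
  have hnpos : (0 : ℝ) < n := by linarith
  have hden : (0 : ℝ) < 2 * n + 1 := by linarith
  have hL : 0 ≤ Real.sqrt (2 * n / (2 * n + 1)) * (1 / Real.sqrt n) * P := by
    have := Real.sqrt_nonneg ((2 * (n : ℝ)) / (2 * n + 1))
    have := Real.sqrt_nonneg (n : ℝ)
    positivity
  rw [Real.le_sqrt hL Real.pi_pos.le]
  have hsq : (Real.sqrt (2 * n / (2 * n + 1)) * (1 / Real.sqrt n) * P) ^ 2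
      = (2 * n / (2 * n + 1)) * (1 / n) * P ^ 2 := by
    rw [mul_pow, mul_pow, Real.sq_sqrt (by positivity), div_pow, one_pow,
      Real.sq_sqrt hnpos.le]
  rw [hsq]
  have hW : Real.Wallis.W n = P ^ 2 / (2 * n + 1) := wallis_W_eq n
  have hWle : Real.Wallis.W n ≤ π / 2 := Real.Wallis.W_le n
  rw [hW] at hWle
  have : (2 * (n : ℝ) / (2 * n + 1)) * (1 / n) * P ^ 2 = 2 * (P ^ 2 / (2 * n + 1)) := by
    field_simp
  rw [this]
  linarith
end

section
/- (Wallis's formula, second form) The limit as n → ∞ of √n · ∏_{k=1}^{n} (2k/(2k+1)) = √n · (2/3)·(4/5)·(6/7)···(2n/(2n+1)) equals √π/2. -/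
open Real Filter

private lemma key_identity (n : ℕ) :
    (∏ k ∈ Finset.Icc 1 n, (2 * (k : ℝ)) / (2 * k + 1)) ^ 2 * (2 * n + 1) =
      Real.Wallis.W n := by
  induction n with
  | zero => simp [Real.Wallis.W]
  | succ n ih =>
    rw [Finset.prod_Icc_succ_top (by omega), Real.Wallis.W_succ, ← ih]
    have h1 : (2 * (n : ℝ) + 1) ≠ 0 := by positivity
    have h3 : (2 * (n : ℝ) + 3) ≠ 0 := by positivity
    push_cast
    field_simp
    ring

theorem wallis_formula_second_form :
    Tendsto (fun n : ℕ =>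
        Real.sqrt n * ∏ k ∈ Finset.Icc 1 n, (2 * (k : ℝ)) / (2 * k + 1))
      atTop (nhds (Real.sqrt π / 2)) := by
  have hP : ∀ n : ℕ, 0 ≤ ∏ k ∈ Finset.Icc 1 n, (2 * (k : ℝ)) / (2 * k + 1) := by
    intro n; positivity
  have h1 : Tendsto (fun n : ℕ =>
      (n : ℝ) * (∏ k ∈ Finset.Icc 1 n, (2 * (k : ℝ)) / (2 * k + 1)) ^ 2)
      atTop (nhds (π / 4)) := by
    have heq : ∀ n : ℕ, (n : ℝ) * (∏ k ∈ Finset.Icc 1 n, (2 * (k : ℝ)) / (2 * k + 1)) ^ 2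
        = (n / (2 * n + 1)) * Real.Wallis.W n := by
      intro n
      rw [← key_identity n]
      have h1 : (2 * (n : ℝ) + 1) ≠ 0 := by positivity
      field_simp
    have : Tendsto (fun n : ℕ => ((n : ℝ) / (2 * n + 1)) * Real.Wallis.W n)
        atTop (nhds ((1 / 2) * (π / 2))) :=
      Stirling.tendsto_self_div_two_mul_self_add_one.mul
        Real.Wallis.tendsto_W_nhds_pi_div_two
    rw [show (π / 4 : ℝ) = 1 / 2 * (π / 2) by ring]
    exact this.congr fun n => (heq n).symm
  have h2 := (Real.continuous_sqrt.tendsto (π / 4)).comp h1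
  have hsq : Real.sqrt (π / 4) = Real.sqrt π / 2 := by
    rw [Real.sqrt_div Real.pi_pos.le, show (4 : ℝ) = 2 ^ 2 by norm_num,
      Real.sqrt_sq (by norm_num : (0:ℝ) ≤ 2)]
  rw [← hsq]
  refine h2.congr fun n => ?_
  simp only [Function.comp_apply]
  rw [Real.sqrt_mul (Nat.cast_nonneg n), Real.sqrt_sq (hP n)]
end
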